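/- arXiv:0705.3767 — 5 statements merged into one kernel-verified Lean document; each statement's English description precedes it below -/
import Mathlib

section
/- Let I and J be (x,y)-primary monomial ideals of K[x,y] with associated sequences a = (a_0, ..., a_d) and a' = (a'_0, ..., a'_e) respectively (where a_i = min{ j : x^{d-i} y^j ∈ I } and similarly for a'). Then the sequence associated to the product ideal IJ (with respect to degree d+e) is c = (c_0, ..., c_{d+e}) where c_i = min{ a_j + a'_k : j + k = i, 0 ≤ j ≤ d, 0 ≤ k ≤ e }. -/
open MvPolynomial

private noncomputable def msup (p q : ℕ) : Fin 2 →₀ ℕ := Finsupp.single 0 p + Finsupp.single 1 q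

private lemma msup_apply0 (p q : ℕ) : msup p q 0 = p := by
  simp [msup, Finsupp.single_apply]

private lemma msup_apply1 (p q : ℕ) : msup p q 1 = q := by
  simp [msup, Finsupp.single_apply]

private lemma msup_le_iff {p q p' q' : ℕ} : msup p q ≤ msup p' q' ↔ p ≤ p' ∧ q ≤ q' := by
  rw [Finsupp.le_def]
  constructor
  · intro h
    exact ⟨by simpa [msup_apply0] using h 0, by simpa [msup_apply1] using h 1⟩
  · rintro ⟨h1, h2⟩ s
    fin_cases s <;> simp [msup_apply0, msup_apply1, h1, h2]

private lemma msup_add (p q p' q' : ℕ) : msup p q + msup p' q' = msup (p + p') (q + q') := by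
  unfold msup
  rw [add_add_add_comm, ← Finsupp.single_add, ← Finsupp.single_add]

private lemma X_mul_eq (K : Type*) [Field K] (p q : ℕ) :
    (X 0 : MvPolynomial (Fin 2) K) ^ p * X 1 ^ q = monomial (msup p q) 1 := by
  rw [X_pow_eq_monomial, X_pow_eq_monomial, monomial_mul, one_mul, msup]

private lemma mono_of (a : ℕ → ℕ) (d : ℕ) (h : ∀ i, i < d → a i ≤ a (i + 1)) :
    ∀ p q, p ≤ q → q ≤ d → a p ≤ a q := by
  intro p q hpq hqd
  induction q with
  | zero => simp_all
  | succ n ih =>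
    rcases Nat.lt_or_ge p (n + 1) with h' | h'
    · exact le_trans (ih (Nat.lt_succ_iff.mp h') (le_trans (Nat.le_succ n) hqd))
        (h n (Nat.lt_of_succ_le hqd))
    · have : p = n + 1 := le_antisymm hpq h'
      subst this; exact le_refl _

/-- The sequence associated to a product of two (x,y)-primary monomial ideals is
the min-convolution of the associated sequences. -/
theorem stmt1 (K : Type*) [Field K] (d e : ℕ)
    (a a' : ℕ → ℕ) (ha0 : a 0 = 0) (ha'0 : a' 0 = 0)
    (hma : ∀ i, i < d → a i ≤ a (i + 1)) (hma' : ∀ i, i < e → a' i ≤ a' (i + 1))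
    (I J : Ideal (MvPolynomial (Fin 2) K))
    (hI : I = Ideal.span {m : MvPolynomial (Fin 2) K |
      ∃ i ≤ d, m = X 0 ^ (d - i) * X 1 ^ (a i)})
    (hJ : J = Ideal.span {m : MvPolynomial (Fin 2) K |
      ∃ i ≤ e, m = X 0 ^ (e - i) * X 1 ^ (a' i)}) :
    ∀ i ≤ d + e,
      sInf {j : ℕ | (X 0 : MvPolynomial (Fin 2) K) ^ (d + e - i) * X 1 ^ j ∈ I * J} =
      sInf {x : ℕ | ∃ v u, v + u = i ∧ v ≤ d ∧ u ≤ e ∧ x = a v + a' u} := by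
  classical
  intro i hi
  have monA := mono_of a d hma
  have monA' := mono_of a' e hma'
  -- the product ideal is a monomial ideal
  have hIJ : I * J = Ideal.span ((fun s => monomial s (1 : K)) ''
      {s | ∃ v u, v ≤ d ∧ u ≤ e ∧ s = msup (d - v + (e - u)) (a v + a' u)}) := by
    rw [hI, hJ, Ideal.span_mul_span]
    congr 1
    ext m
    constructor
    · intro hm
      simp only [Set.mem_mul] at hm
      obtain ⟨x, hx, y, hy, rfl⟩ := hm
      obtain ⟨v, hv, rfl⟩ := hx
      obtain ⟨u, hu, rfl⟩ := hy
      refine ⟨msup (d - v + (e - u)) (a v + a' u), ⟨v, u, hv, hu, rfl⟩, ?_⟩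
      simp only
      rw [X_mul_eq, X_mul_eq, monomial_mul, one_mul, msup_add]
    · rintro ⟨s, ⟨v, u, hv, hu, rfl⟩, rfl⟩
      simp only [Set.mem_iUnion, Set.mem_singleton_iff]
      refine ⟨X 0 ^ (d - v) * X 1 ^ (a v), ⟨v, hv, rfl⟩,
        X 0 ^ (e - u) * X 1 ^ (a' u), ⟨u, hu, rfl⟩, ?_⟩
      beta_reduce
      rw [X_mul_eq, X_mul_eq, monomial_mul, one_mul, msup_add]
  have key : ∀ j : ℕ, ((X 0 : MvPolynomial (Fin 2) K) ^ (d + e - i) * X 1 ^ j ∈ I * J) ↔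
      ∃ v u, v ≤ d ∧ u ≤ e ∧ i ≤ v + u ∧ a v + a' u ≤ j := by
    intro j
    rw [hIJ, X_mul_eq, mem_ideal_span_monomial_image]
    have hsupp : (monomial (msup (d + e - i) j) (1 : K)).support = {msup (d + e - i) j} := by
      rw [support_monomial, if_neg one_ne_zero]
    rw [hsupp]
    simp only [Finset.mem_singleton, forall_eq, Set.mem_setOf_eq]
    constructor
    · rintro ⟨si, ⟨v, u, hv, hu, rfl⟩, hle⟩
      rw [msup_le_iff] at hle
      exact ⟨v, u, hv, hu, by omega, hle.2⟩
    · rintro ⟨v, u, hv, hu, hvu, hle⟩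
      exact ⟨msup (d - v + (e - u)) (a v + a' u), ⟨v, u, hv, hu, rfl⟩,
        msup_le_iff.mpr ⟨by omega, hle⟩⟩
  have hset : {j : ℕ | (X 0 : MvPolynomial (Fin 2) K) ^ (d + e - i) * X 1 ^ j ∈ I * J} =
      {j : ℕ | ∃ v u, v ≤ d ∧ u ≤ e ∧ i ≤ v + u ∧ a v + a' u ≤ j} := by
    ext j; exact key j
  rw [hset]
  set A : Set ℕ := {j : ℕ | ∃ v u, v ≤ d ∧ u ≤ e ∧ i ≤ v + u ∧ a v + a' u ≤ j} with hA
  set B : Set ℕ := {x : ℕ | ∃ v u, v + u = i ∧ v ≤ d ∧ u ≤ e ∧ x = a v + a' u} with hB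
  have hBA : B ⊆ A := by
    rintro x ⟨v, u, hvu, hv, hu, rfl⟩
    exact ⟨v, u, hv, hu, le_of_eq hvu.symm, le_refl _⟩
  have hBne : B.Nonempty := by
    refine ⟨a (min i d) + a' (i - min i d), min i d, i - min i d, ?_, ?_, ?_, rfl⟩ <;> omega
  have hAne : A.Nonempty := hBne.mono hBA
  apply le_antisymm
  · exact Nat.sInf_le (hBA (Nat.sInf_mem hBne))
  · obtain ⟨v, u, hv, hu, hvu, hle⟩ := Nat.sInf_mem hAne
    rcases le_total v i with h | h
    · have hB' : a v + a' (i - v) ∈ B := ⟨v, i - v, by omega, hv, by omega, rfl⟩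
      calc sInf B ≤ a v + a' (i - v) := Nat.sInf_le hB'
        _ ≤ a v + a' u := by
            have : a' (i - v) ≤ a' u := monA' _ _ (by omega) hu
            omega
        _ ≤ sInf A := hle
    · have hB' : a i + a' 0 ∈ B := ⟨i, 0, by omega, by omega, by omega, rfl⟩
      calc sInf B ≤ a i + a' 0 := Nat.sInf_le hB'
        _ ≤ a v + a' u := by
            have : a i ≤ a v := monA _ _ h hv
            omega
        _ ≤ sInf A := hle
end

section
/- For every d ≥ 1, the number of permutations σ of {1, ..., d} satisfying σ(j) < σ(j+2) for all j = 1, ..., d−2 equals the binomial coefficient C(d, ⌊d/2⌋). -/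
open Finset

section aux
variable {d : ℕ}

lemma stmt8_chain (σ : Equiv.Perm (Fin d))
    (hσ : ∀ i j : Fin d, (j : ℕ) = (i : ℕ) + 2 → σ i < σ j) :
    ∀ (k a : ℕ) (ha : a < d) (hb : a + 2 * k + 2 < d),
      σ ⟨a, ha⟩ < σ ⟨a + 2 * k + 2, hb⟩ := by
  intro k
  induction k with
  | zero => intro a ha hb; exact hσ _ _ (by simp)
  | succ n ih =>
    intro a ha hb
    have h1 : a + 2 * n + 2 < d := by omega
    refine (ih a ha h1).trans ?_
    exact hσ ⟨a + 2 * n + 2, h1⟩ ⟨a + 2 * (n + 1) + 2, hb⟩ (by simp; omega)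

lemma stmt8_compl_card (S : Finset (Fin d)) (hS : S.card = d / 2) :
    Sᶜ.card = d - d / 2 := by
  simp [Finset.card_compl, hS]

noncomputable def stmt8_f (S : Finset (Fin d)) (hS : S.card = d / 2) (i : Fin d) : Fin d :=
  if h : i.val % 2 = 1 then
    S.orderEmbOfFin hS ⟨i.val / 2, by have := i.isLt; omega⟩
  else
    Sᶜ.orderEmbOfFin (stmt8_compl_card S hS) ⟨i.val / 2, by have := i.isLt; omega⟩

lemma stmt8_f_odd (S : Finset (Fin d)) (hS : S.card = d / 2) (i : Fin d)
    (hi : i.val % 2 = 1) :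
    stmt8_f S hS i = S.orderEmbOfFin hS ⟨i.val / 2, by have := i.isLt; omega⟩ := by
  unfold stmt8_f; rw [dif_pos hi]

lemma stmt8_f_even (S : Finset (Fin d)) (hS : S.card = d / 2) (i : Fin d)
    (hi : ¬ i.val % 2 = 1) :
    stmt8_f S hS i =
      Sᶜ.orderEmbOfFin (stmt8_compl_card S hS) ⟨i.val / 2, by have := i.isLt; omega⟩ := by
  unfold stmt8_f; rw [dif_neg hi]

lemma stmt8_f_inj (S : Finset (Fin d)) (hS : S.card = d / 2) :
    Function.Injective (stmt8_f S hS) := by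
  intro i j h
  by_cases hi : i.val % 2 = 1 <;> by_cases hj : j.val % 2 = 1
  · rw [stmt8_f_odd S hS i hi, stmt8_f_odd S hS j hj] at h
    have h2 : i.val / 2 = j.val / 2 :=
      congrArg Fin.val ((S.orderEmbOfFin hS).injective h)
    exact Fin.ext (by omega)
  · rw [stmt8_f_odd S hS i hi, stmt8_f_even S hS j hj] at h
    have h1 := S.orderEmbOfFin_mem hS ⟨i.val / 2, by have := i.isLt; omega⟩
    have h2 := Sᶜ.orderEmbOfFin_mem (stmt8_compl_card S hS)
      ⟨j.val / 2, by have := j.isLt; omega⟩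
    rw [h] at h1
    exact absurd h1 (Finset.mem_compl.mp h2)
  · rw [stmt8_f_even S hS i hi, stmt8_f_odd S hS j hj] at h
    have h1 := S.orderEmbOfFin_mem hS ⟨j.val / 2, by have := j.isLt; omega⟩
    have h2 := Sᶜ.orderEmbOfFin_mem (stmt8_compl_card S hS)
      ⟨i.val / 2, by have := i.isLt; omega⟩
    rw [← h] at h1
    exact absurd h1 (Finset.mem_compl.mp h2)
  · rw [stmt8_f_even S hS i hi, stmt8_f_even S hS j hj] at h
    have h2 : i.val / 2 = j.val / 2 :=
      congrArg Fin.val ((Sᶜ.orderEmbOfFin (stmt8_compl_card S hS)).injective h)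
    exact Fin.ext (by omega)

lemma stmt8_f_mono (S : Finset (Fin d)) (hS : S.card = d / 2) (i j : Fin d)
    (hij : (j : ℕ) = (i : ℕ) + 2) : stmt8_f S hS i < stmt8_f S hS j := by
  have hdiv : j.val / 2 = i.val / 2 + 1 := by omega
  by_cases hi : i.val % 2 = 1
  · rw [stmt8_f_odd S hS i hi, stmt8_f_odd S hS j (by omega)]
    exact (S.orderEmbOfFin hS).strictMono (by rw [Fin.mk_lt_mk]; omega)
  · rw [stmt8_f_even S hS i hi, stmt8_f_even S hS j (by omega)]
    exact (Sᶜ.orderEmbOfFin (stmt8_compl_card S hS)).strictMono (by rw [Fin.mk_lt_mk]; omega)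

end aux

/-- The number of permutations `σ` of `{1,...,d}` with `σ(j) < σ(j+2)` for all
`j = 1,...,d-2` equals `C(d, ⌊d/2⌋)`. -/
theorem stmt8 (d : ℕ) (hd : 1 ≤ d) :
    Nat.card {σ : Equiv.Perm (Fin d) //
      ∀ i j : Fin d, (j : ℕ) = (i : ℕ) + 2 → σ i < σ j} = d.choose (d / 2) := by
  classical
  set g : {S : Finset (Fin d) // S.card = d / 2} →
      {σ : Equiv.Perm (Fin d) // ∀ i j : Fin d, (j : ℕ) = (i : ℕ) + 2 → σ i < σ j} :=
    fun S => ⟨Equiv.ofBijective _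
        ((Finite.injective_iff_bijective).mp (stmt8_f_inj S.1 S.2)),
      fun i j hij => stmt8_f_mono S.1 S.2 i j hij⟩ with hg
  have gval : ∀ (S : {S : Finset (Fin d) // S.card = d / 2}) (i : Fin d),
      (g S : Equiv.Perm (Fin d)) i = stmt8_f S.1 S.2 i := fun S i => rfl
  have hsurj : Function.Surjective g := by
    rintro ⟨σ, hσ⟩
    set S : Finset (Fin d) :=
      Finset.image (fun m : Fin (d / 2) => σ ⟨2 * m.val + 1, by have := m.isLt; omega⟩)
        Finset.univ with hSdef
    have hinj : Function.Injective
        (fun m : Fin (d / 2) => σ ⟨2 * m.val + 1, by have := m.isLt; omega⟩) := by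
      intro a b hab
      have h2 : 2 * a.val + 1 = 2 * b.val + 1 := congrArg Fin.val (σ.injective hab)
      exact Fin.ext (by omega)
    have hS : S.card = d / 2 := by
      rw [hSdef, Finset.card_image_of_injective _ hinj, Finset.card_univ, Fintype.card_fin]
    have hodd : (fun m : Fin (d / 2) => σ ⟨2 * m.val + 1, by have := m.isLt; omega⟩) =
        S.orderEmbOfFin hS := by
      apply Finset.orderEmbOfFin_unique
      · intro m; exact Finset.mem_image_of_mem _ (Finset.mem_univ m)
      · intro a b hab
        have hab' : a.val < b.val := hab
        have h2 : 2 * a.val + 1 + 2 * (b.val - a.val - 1) + 2 = 2 * b.val + 1 := by omega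
        have := stmt8_chain σ hσ (b.val - a.val - 1) (2 * a.val + 1)
          (by have := a.isLt; omega) (by have := b.isLt; omega)
        simpa only [h2] using this
    have heven : (fun m : Fin (d - d / 2) => σ ⟨2 * m.val, by have := m.isLt; omega⟩) =
        Sᶜ.orderEmbOfFin (stmt8_compl_card S hS) := by
      apply Finset.orderEmbOfFin_unique
      · intro m
        rw [Finset.mem_compl, hSdef, Finset.mem_image]
        rintro ⟨x, -, hx⟩
        have h2 : 2 * x.val + 1 = 2 * m.val := congrArg Fin.val (σ.injective hx)
        omega
      · intro a b hab
        have hab' : a.val < b.val := hab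
        by_cases ha0 : a.val = 0
        · have h2 : 0 + 2 * (b.val - 1) + 2 = 2 * b.val := by omega
          have := stmt8_chain σ hσ (b.val - 1) 0 (by omega) (by have := b.isLt; omega)
          simp only [h2] at this
          refine lt_of_eq_of_lt ?_ this
          congr 1
          exact Fin.ext (by simp [ha0])
        · have h2 : 2 * a.val + 2 * (b.val - a.val - 1) + 2 = 2 * b.val := by omega
          have := stmt8_chain σ hσ (b.val - a.val - 1) (2 * a.val)
            (by have := a.isLt; omega) (by have := b.isLt; omega)
          simpa only [h2] using this
    refine ⟨⟨S, hS⟩, ?_⟩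
    apply Subtype.ext
    apply Equiv.ext
    intro i
    rw [gval ⟨S, hS⟩ i]
    by_cases hi : i.val % 2 = 1
    · rw [stmt8_f_odd S hS i hi]
      have h3 := congrFun hodd ⟨i.val / 2, by have := i.isLt; omega⟩
      refine Eq.trans (h3.symm) ?_
      congr 1
      exact Fin.ext (by simp; omega)
    · rw [stmt8_f_even S hS i hi]
      have h3 := congrFun heven ⟨i.val / 2, by have := i.isLt; omega⟩
      refine Eq.trans (h3.symm) ?_
      congr 1
      exact Fin.ext (by simp; omega)
  have himg : ∀ (U : Finset (Fin d)) (hU : U.card = d / 2),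
      Finset.image (fun m : Fin (d / 2) => U.orderEmbOfFin hU m) Finset.univ = U := by
    intro U hU
    apply Finset.eq_of_subset_of_card_le
    · intro x hx
      rw [Finset.mem_image] at hx
      obtain ⟨m, -, rfl⟩ := hx
      exact U.orderEmbOfFin_mem hU m
    · rw [Finset.card_image_of_injective _ (U.orderEmbOfFin hU).injective,
        Finset.card_univ, Fintype.card_fin, hU]
  have hinjg : Function.Injective g := by
    rintro ⟨S, hS⟩ ⟨T, hT⟩ hST
    have hval : ∀ (U : Finset (Fin d)) (hU : U.card = d / 2) (m : Fin (d / 2)),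
        (g ⟨U, hU⟩ : Equiv.Perm (Fin d)) ⟨2 * m.val + 1, by have := m.isLt; omega⟩ =
        U.orderEmbOfFin hU m := by
      intro U hU m
      rw [gval, stmt8_f_odd U hU _ (by simp)]
      congr 1
      exact Fin.ext (by simp; omega)
    apply Subtype.ext
    show S = T
    refine (himg S hS).symm.trans (Eq.trans ?_ (himg T hT))
    apply Finset.image_congr
    intro m _
    have h1 := hval S hS m
    have h2 := hval T hT m
    rw [hST] at h1
    exact h1.symm.trans h2
  rw [← Nat.card_congr (Equiv.ofBijective g ⟨hinjg, hsurj⟩), Nat.card_eq_fintype_card,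
    Fintype.card_finset_len, Fintype.card_fin]
end

section
/- Let d, e ≥ 1, let a = (a_0, ..., a_d) and a' = (a'_0, ..., a'_e) be sequences of rationals with a_0 = a'_0 = 0, satisfying a_{j+2} − a_{j+1} ≥ a_j − a_{j-1} for all valid j (and similarly for a'). Define c_i = min{ a_v + a'_u : v + u = i, 0 ≤ v ≤ d, 0 ≤ u ≤ e } for i = 0, ..., d+e. Then c also satisfies c_{j+2} − c_{j+1} ≥ c_j − c_{j-1} for all j = 1, ..., d+e−2. -/
/-- Two-step gaps are nondecreasing. -/
lemma twostep (d : ℕ) (a : ℕ → ℚ)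
    (ha : ∀ j, 1 ≤ j → j + 2 ≤ d → a j - a (j - 1) ≤ a (j + 2) - a (j + 1)) :
    ∀ n v, v + 2 + n ≤ d → a (v+2) - a v ≤ a (v+2+n) - a (v+n) := by
  intro n
  induction n with
  | zero => intro v h; simp
  | succ n ih =>
    intro v h
    have h1 := ih v (by omega)
    have h2 := ha (v + n + 1) (by omega) (by omega)
    have hs : v + n + 1 - 1 = v + n := by omega
    rw [hs] at h2
    have e1 : v + n + 1 + 2 = v + 2 + (n+1) := by ring
    have e2 : v + n + 1 + 1 = v + 2 + n := by ring
    rw [e1, e2] at h2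
    have e3 : v + (n+1) = v + n + 1 := by ring
    rw [e3]
    linarith

/-- The big-cone condition (increasing second differences of gap vectors two apart)
is preserved under min-convolution. -/
theorem stmt9 (d e : ℕ) (hd : 1 ≤ d) (he : 1 ≤ e) (a a' c : ℕ → ℚ)
    (ha0 : a 0 = 0) (ha'0 : a' 0 = 0)
    (ha : ∀ j, 1 ≤ j → j + 2 ≤ d → a j - a (j - 1) ≤ a (j + 2) - a (j + 1))
    (ha' : ∀ j, 1 ≤ j → j + 2 ≤ e → a' j - a' (j - 1) ≤ a' (j + 2) - a' (j + 1))
    (hc : ∀ i ≤ d + e,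
      IsLeast {x : ℚ | ∃ v u, v + u = i ∧ v ≤ d ∧ u ≤ e ∧ x = a v + a' u} (c i)) :
    ∀ j, 1 ≤ j → j + 2 ≤ d + e → c j - c (j - 1) ≤ c (j + 2) - c (j + 1) := by
  intro j hj hje
  obtain ⟨⟨v, u, hvu, hvd, hue, hceq1⟩, _⟩ := hc (j-1) (by omega)
  obtain ⟨⟨p, q, hpq, hpd, hqe, hceq2⟩, _⟩ := hc (j+2) (by omega)
  obtain ⟨_, hlbj⟩ := hc j (by omega)
  obtain ⟨_, hlbj1⟩ := hc (j+1) (by omega)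
  rcases le_or_gt (v+2) p with hcase | hcase
  · have h1 : c j ≤ a (p-2) + a' q := hlbj ⟨p-2, q, by omega, by omega, hqe, rfl⟩
    have h2 : c (j+1) ≤ a (v+2) + a' u := hlbj1 ⟨v+2, u, by omega, by omega, hue, rfl⟩
    have h3 := twostep d a ha (p - (v+2)) v (by omega)
    have e1 : v + 2 + (p - (v+2)) = p := by omega
    have e2 : v + (p - (v+2)) = p - 2 := by omega
    rw [e1, e2] at h3
    linarith
  · have hq : u + 2 ≤ q := by omega
    have h1 : c j ≤ a p + a' (q-2) := hlbj ⟨p, q-2, by omega, hpd, by omega, rfl⟩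
    have h2 : c (j+1) ≤ a v + a' (u+2) := hlbj1 ⟨v, u+2, by omega, hvd, by omega, rfl⟩
    have h3 := twostep e a' ha' (q - (u+2)) u (by omega)
    have e1 : u + 2 + (q - (u+2)) = q := by omega
    have e2 : u + (q - (u+2)) = q - 2 := by omega
    rw [e1, e2] at h3
    linarith
end

section
/- Let I be a monomial ideal of K[x,y] with associated sequence a = (a_0, ..., a_d) (i.e., a_i = min{ j : x^{d-i} y^j ∈ I }, weakly increasing with a_0 = 0). Then for every k ≥ 0, the K-dimension of R/I^{k+1} equals the sum over i = 0, ..., (k+1)d of min{ a_{j_1} + ... + a_{j_{k+1}} : j_1 + ... + j_{k+1} = i, 0 ≤ j_v ≤ d }. -/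
open MvPolynomial

/-- Existence of a composition of `i` into `k+1` parts each at most `d`. -/
lemma aux_comp (d : ℕ) : ∀ (k i : ℕ), i ≤ (k+1)*d →
    ∃ f : Fin (k+1) → ℕ, (∀ v, f v ≤ d) ∧ ∑ v, f v = i := by
  intro k
  induction k with
  | zero =>
    intro i h
    exact ⟨fun _ => i, fun _ => by simpa using h, by simp⟩
  | succ k ih =>
    intro i h
    have hm : i - min i d ≤ (k+1)*d := by
      rw [Nat.succ_mul (k+1) d] at h
      rcases Nat.le_total i d with h' | h'
      · rw [min_eq_left h']; omega
      · rw [min_eq_right h']; omega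
    obtain ⟨f, hf, hsum⟩ := ih (i - min i d) hm
    refine ⟨Fin.cons (min i d) f, ?_, ?_⟩
    · intro v
      refine Fin.cases ?_ (fun j => ?_) v
      · simpa using min_le_right i d
      · simpa using hf j
    · rw [Fin.sum_cons, hsum]; omega

lemma aux_amono (d : ℕ) (a : ℕ → ℕ) (hmono : ∀ i, i < d → a i ≤ a (i + 1)) :
    ∀ m n, m ≤ n → n ≤ d → a m ≤ a n := by
  intro m n hmn
  induction n, hmn using Nat.le_induction with
  | base => intro _; exact le_rfl
  | succ n hn ih =>
    intro hnd
    exact le_trans (ih (by omega)) (hmono n (by omega))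

lemma aux_sum_le {n d : ℕ} (f : Fin n → ℕ) (hf : ∀ v, f v ≤ d) : ∑ v, f v ≤ n * d := by
  calc ∑ v, f v ≤ ∑ _v : Fin n, d := Finset.sum_le_sum (fun v _ => hf v)
  _ = n * d := by simp [Finset.sum_const, mul_comm]

lemma aux_pow {K : Type*} [Field K] (d : ℕ) (a : ℕ → ℕ)
    (I : Ideal (MvPolynomial (Fin 2) K))
    (hI : I = Ideal.span {m : MvPolynomial (Fin 2) K |
      ∃ i ≤ d, m = X 0 ^ (d - i) * X 1 ^ (a i)}) :
    ∀ k : ℕ, I ^ (k+1) = Ideal.span {m : MvPolynomial (Fin 2) K |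
      ∃ f : Fin (k+1) → ℕ, (∀ v, f v ≤ d) ∧
      m = X 0 ^ ((k+1)*d - ∑ v, f v) * X 1 ^ (∑ v, a (f v))} := by
  intro k
  induction k with
  | zero =>
    rw [pow_one, hI]
    congr 1
    ext m
    simp only [Set.mem_setOf_eq]
    constructor
    · rintro ⟨i, hid, rfl⟩
      refine ⟨fun _ => i, fun _ => hid, by simp⟩
    · rintro ⟨f, hf, rfl⟩
      refine ⟨f 0, hf 0, by simp⟩
  | succ k ih =>
    rw [pow_succ, ih, hI, Ideal.span_mul_span']
    congr 1
    ext m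
    simp only [Set.mem_mul, Set.mem_setOf_eq]
    constructor
    · rintro ⟨m1, ⟨f, hf, rfl⟩, m2, ⟨i, hid, rfl⟩, rfl⟩
      refine ⟨Fin.cons i f, ?_, ?_⟩
      · intro v
        refine Fin.cases (by simpa using hid) (fun j => by simpa using hf j) v
      · have h1 : ∑ v, f v ≤ (k+1)*d := aux_sum_le f hf
        have e1 : ∑ v, (Fin.cons i f : Fin (k+2) → ℕ) v = i + ∑ v, f v := by
          simp [Fin.sum_univ_succ]
        have e2 : ∑ v, a ((Fin.cons i f : Fin (k+2) → ℕ) v) = a i + ∑ v, a (f v) := by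
          simp [Fin.sum_univ_succ]
        rw [e1, e2, mul_mul_mul_comm, ← pow_add, ← pow_add]
        have e3 : ((k+1)*d - ∑ v, f v) + (d - i) = (k+1+1)*d - (i + ∑ v, f v) := by
          rw [Nat.succ_mul (k+1) d]; omega
        rw [e3, Nat.add_comm (∑ v, a (f v)) (a i)]
    · rintro ⟨f, hf, rfl⟩
      have h1 : ∑ v, Fin.tail f v ≤ (k+1)*d := aux_sum_le _ (fun v => hf v.succ)
      refine ⟨X 0 ^ ((k+1)*d - ∑ v, Fin.tail f v) * X 1 ^ (∑ v, a (Fin.tail f v)),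
        ⟨Fin.tail f, fun v => hf v.succ, rfl⟩,
        X 0 ^ (d - f 0) * X 1 ^ (a (f 0)), ⟨f 0, hf 0, rfl⟩, ?_⟩
      have e1 : ∑ v, f v = f 0 + ∑ v, Fin.tail f v := by
        simp [Fin.sum_univ_succ, Fin.tail]
      have e2 : ∑ v, a (f v) = a (f 0) + ∑ v, a (Fin.tail f v) := by
        simp [Fin.sum_univ_succ, Fin.tail]
      rw [mul_mul_mul_comm, ← pow_add, ← pow_add, e1, e2]
      have h0 : f 0 ≤ d := hf 0
      have e3 : ((k+1)*d - ∑ v, Fin.tail f v) + (d - f 0) = (k+1+1)*d - (f 0 + ∑ v, Fin.tail f v) := by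
        rw [Nat.succ_mul (k+1) d]; omega
      rw [e3, Nat.add_comm (∑ v, a (Fin.tail f v)) (a (f 0))]

lemma fin2_split (s : Fin 2 →₀ ℕ) :
    Finsupp.single 0 (s 0) + Finsupp.single 1 (s 1) = s := by
  ext j
  fin_cases j <;> simp [Finsupp.single_apply]

lemma fin2_app0 (u v : ℕ) :
    ((Finsupp.single (0 : Fin 2) u + Finsupp.single 1 v : Fin 2 →₀ ℕ)) 0 = u := by
  simp [Finsupp.single_apply]

lemma fin2_app1 (u v : ℕ) :
    ((Finsupp.single (0 : Fin 2) u + Finsupp.single 1 v : Fin 2 →₀ ℕ)) 1 = v := by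
  simp [Finsupp.single_apply]

lemma mon_eq {K : Type*} [CommSemiring K] (u v : ℕ) :
    (X 0 ^ u * X 1 ^ v : MvPolynomial (Fin 2) K) =
      monomial (Finsupp.single 0 u + Finsupp.single 1 v) 1 := by
  rw [X_pow_eq_monomial, X_pow_eq_monomial, monomial_mul, one_mul]

/-- For a monomial ideal `I` of `K[x,y]` with associated sequence `a`,
`dim_K R/I^{k+1} = Σ_{i=0}^{(k+1)d} min{ a_{j_1}+...+a_{j_{k+1}} : j_1+...+j_{k+1} = i }`. -/
theorem stmt14 (K : Type*) [Field K] (d : ℕ) (hd : 1 ≤ d) (a : ℕ → ℕ)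
    (ha0 : a 0 = 0) (hmono : ∀ i, i < d → a i ≤ a (i + 1))
    (I : Ideal (MvPolynomial (Fin 2) K))
    (hI : I = Ideal.span {m : MvPolynomial (Fin 2) K |
      ∃ i ≤ d, m = X 0 ^ (d - i) * X 1 ^ (a i)}) (k : ℕ) :
    Module.finrank K (MvPolynomial (Fin 2) K ⧸ I ^ (k + 1)) =
      ∑ i ∈ Finset.range ((k + 1) * d + 1),
        sInf {x : ℕ | ∃ f : Fin (k + 1) → ℕ,
          (∀ v, f v ≤ d) ∧ (∑ v, f v = i) ∧ x = ∑ v, a (f v)} := by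
  classical
  have amono := aux_amono d a hmono
  set D := (k + 1) * d with hD
  let bs : ℕ → Set ℕ := fun i => {x : ℕ | ∃ f : Fin (k + 1) → ℕ,
      (∀ v, f v ≤ d) ∧ (∑ v, f v = i) ∧ x = ∑ v, a (f v)}
  let b : ℕ → ℕ := fun i => sInf (bs i)
  show _ = ∑ i ∈ Finset.range (D + 1), b i
  -- basic facts about b
  have hb_le : ∀ (i : ℕ) (f : Fin (k + 1) → ℕ), (∀ v, f v ≤ d) → (∑ v, f v = i) →
      b i ≤ ∑ v, a (f v) := fun i f h1 h2 => Nat.sInf_le ⟨f, h1, h2, rfl⟩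
  have hb_mem : ∀ i ≤ D, ∃ f : Fin (k + 1) → ℕ,
      (∀ v, f v ≤ d) ∧ (∑ v, f v = i) ∧ b i = ∑ v, a (f v) := by
    intro i hi
    have hne : (bs i).Nonempty := by
      obtain ⟨f, hf, hsum⟩ := aux_comp d k i (by rw [← hD]; exact hi)
      exact ⟨∑ v, a (f v), f, hf, hsum, rfl⟩
    obtain ⟨f, h1, h2, h3⟩ := Nat.sInf_mem hne
    exact ⟨f, h1, h2, h3⟩
  have hb0 : b 0 = 0 := by
    have h0 : (0 : ℕ) ∈ bs 0 := ⟨fun _ => 0, fun _ => Nat.zero_le d, by simp, by simp [ha0]⟩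
    exact Nat.le_zero.mp (Nat.sInf_le h0)
  have hb_step : ∀ i, i + 1 ≤ D → b i ≤ b (i + 1) := by
    intro i hi
    obtain ⟨f, h1, h2, h3⟩ := hb_mem (i + 1) hi
    have hex : ∃ v0, f v0 ≠ 0 := by
      by_contra hcon
      push_neg at hcon
      have hz : ∑ v, f v = 0 := Finset.sum_eq_zero (fun v _ => hcon v)
      omega
    obtain ⟨v0, hv0⟩ := hex
    set g : Fin (k + 1) → ℕ := Function.update f v0 (f v0 - 1) with hg
    have h4 : f v0 + ∑ v ∈ Finset.univ.erase v0, f v = i + 1 := by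
      rw [Finset.add_sum_erase _ f (Finset.mem_univ v0), h2]
    have hgsum : ∑ v, g v = i := by
      rw [hg, Finset.sum_update_of_mem (Finset.mem_univ v0),
        Finset.sdiff_singleton_eq_erase]
      omega
    have hgd : ∀ v, g v ≤ d := by
      intro v
      rcases eq_or_ne v v0 with rfl | hne
      · rw [hg, Function.update_self]
        exact le_trans (Nat.sub_le _ _) (h1 _)
      · rw [hg, Function.update_of_ne hne]; exact h1 v
    have hgle : ∑ v, a (g v) ≤ ∑ v, a (f v) := by
      apply Finset.sum_le_sum
      intro v _
      rcases eq_or_ne v v0 with rfl | hne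
      · rw [hg, Function.update_self]
        exact amono _ _ (Nat.sub_le _ _) (h1 v)
      · rw [hg, Function.update_of_ne hne]
    calc b i ≤ ∑ v, a (g v) := hb_le i g hgd hgsum
      _ ≤ ∑ v, a (f v) := hgle
      _ = b (i + 1) := h3.symm
  have hbmono : ∀ i j, i ≤ j → j ≤ D → b i ≤ b j := by
    intro i j hij
    induction j, hij using Nat.le_induction with
    | base => intro _; exact le_rfl
    | succ n hn ihn => intro h; exact le_trans (ihn (by omega)) (hb_step n h)
  -- the staircase set
  let T : Set (Fin 2 →₀ ℕ) := {s | b (D - s 0) ≤ s 1}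
  let mn : (Fin 2 →₀ ℕ) → MvPolynomial (Fin 2) K := fun s => monomial s 1
  -- I^(k+1) as a monomial ideal on T
  have hpow : I ^ (k + 1) = Ideal.span (mn '' T) := by
    rw [aux_pow d a I hI k]
    apply le_antisymm
    · rw [Ideal.span_le]
      rintro m ⟨f, hf, rfl⟩
      apply Ideal.subset_span
      have hsle : ∑ v, f v ≤ D := by rw [hD]; exact aux_sum_le f hf
      refine ⟨Finsupp.single 0 (D - ∑ v, f v) + Finsupp.single 1 (∑ v, a (f v)), ?_, ?_⟩
      · show b (D - ((Finsupp.single (0 : Fin 2) (D - ∑ v, f v) +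
          Finsupp.single 1 (∑ v, a (f v)) : Fin 2 →₀ ℕ)) 0) ≤
          ((Finsupp.single (0 : Fin 2) (D - ∑ v, f v) +
            Finsupp.single 1 (∑ v, a (f v)) : Fin 2 →₀ ℕ)) 1
        rw [fin2_app0, fin2_app1]
        have e : D - (D - ∑ v, f v) = ∑ v, f v := by omega
        rw [e]
        exact hb_le _ f hf rfl
      · exact (mon_eq _ _).symm
    · rw [Ideal.span_le]
      rintro m ⟨s, hs, rfl⟩
      have hs' : b (D - s 0) ≤ s 1 := hs
      obtain ⟨f, h1, h2, h3⟩ := hb_mem (D - s 0) (Nat.sub_le _ _)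
      have key1 : mn s = (X 0 ^ (D - ∑ v, f v) * X 1 ^ (∑ v, a (f v))) *
          (X 0 ^ (s 0 - (D - (D - s 0))) * X 1 ^ (s 1 - b (D - s 0))) := by
        rw [mul_mul_mul_comm, ← pow_add, ← pow_add, h2, ← h3]
        have eA : (D - (D - s 0)) + (s 0 - (D - (D - s 0))) = s 0 := by omega
        have eB : b (D - s 0) + (s 1 - b (D - s 0)) = s 1 := by omega
        rw [eA, eB, mon_eq (s 0) (s 1), fin2_split]
      rw [key1]
      exact Ideal.mul_mem_right _ _ (Ideal.subset_span ⟨f, h1, rfl⟩)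
  -- restriction of scalars: the ideal is the K-span of its monomials
  have hkey : (I ^ (k + 1)).restrictScalars K = Submodule.span K (mn '' T) := by
    apply le_antisymm
    · intro x hx
      rw [Submodule.restrictScalars_mem, hpow] at hx
      have hmul : ∀ r : MvPolynomial (Fin 2) K, ∀ s ∈ T,
          r * mn s ∈ Submodule.span K (mn '' T) := by
        intro r
        induction r using MvPolynomial.induction_on with
        | C c =>
          intro s hs
          have hc : (C c : MvPolynomial (Fin 2) K) * mn s = c • mn s := by
            show (C c : MvPolynomial (Fin 2) K) * monomial s 1 = c • monomial s 1
            rw [C_mul_monomial, smul_monomial, smul_eq_mul]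
          rw [hc]
          exact Submodule.smul_mem _ _ (Submodule.subset_span ⟨s, hs, rfl⟩)
        | add p q hp hq =>
          intro s hs
          rw [add_mul]
          exact Submodule.add_mem _ (hp s hs) (hq s hs)
        | mul_X p j hp =>
          intro s hs
          have hstep : p * X j * mn s = p * mn (s + Finsupp.single j 1) := by
            rw [mul_assoc]
            congr 1
            show (X j : MvPolynomial (Fin 2) K) * monomial s 1 =
              monomial (s + Finsupp.single j 1) 1
            rw [← pow_one (X j : MvPolynomial (Fin 2) K), X_pow_eq_monomial,
              monomial_mul, one_mul, add_comm]
          rw [hstep]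
          apply hp
          have hs2 : b (D - s 0) ≤ s 1 := hs
          fin_cases j
          · show b (D - ((s + Finsupp.single (0 : Fin 2) 1 : Fin 2 →₀ ℕ)) 0) ≤
              ((s + Finsupp.single (0 : Fin 2) 1 : Fin 2 →₀ ℕ)) 1
            have e0 : ((s + Finsupp.single (0 : Fin 2) 1 : Fin 2 →₀ ℕ)) 0 = s 0 + 1 := by
              simp [Finsupp.single_apply]
            have e1 : ((s + Finsupp.single (0 : Fin 2) 1 : Fin 2 →₀ ℕ)) 1 = s 1 := by
              simp [Finsupp.single_apply]
            rw [e0, e1]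
            exact le_trans (hbmono _ _ (by omega) (by omega)) hs2
          · show b (D - ((s + Finsupp.single (1 : Fin 2) 1 : Fin 2 →₀ ℕ)) 0) ≤
              ((s + Finsupp.single (1 : Fin 2) 1 : Fin 2 →₀ ℕ)) 1
            have e0 : ((s + Finsupp.single (1 : Fin 2) 1 : Fin 2 →₀ ℕ)) 0 = s 0 := by
              simp [Finsupp.single_apply]
            have e1 : ((s + Finsupp.single (1 : Fin 2) 1 : Fin 2 →₀ ℕ)) 1 = s 1 + 1 := by
              simp [Finsupp.single_apply]
            rw [e0, e1]
            omega
      refine Submodule.span_induction ?_ ?_ ?_ ?_ hx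
      · intro g hg
        exact Submodule.subset_span hg
      · exact Submodule.zero_mem _
      · intro x y _ _ hx' hy'
        exact Submodule.add_mem _ hx' hy'
      · intro r x _ hxK
        rw [smul_eq_mul]
        refine Submodule.span_induction ?_ ?_ ?_ ?_ hxK
        · rintro g ⟨s, hs, rfl⟩
          exact hmul r s hs
        · rw [mul_zero]; exact Submodule.zero_mem _
        · intro u w _ _ hu hw
          rw [mul_add]; exact Submodule.add_mem _ hu hw
        · intro c u _ hu
          rw [mul_smul_comm]; exact Submodule.smul_mem _ _ hu
    · rw [Submodule.span_le]
      rintro g ⟨s, hs, rfl⟩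
      show mn s ∈ (I ^ (k + 1)).restrictScalars K
      rw [Submodule.restrictScalars_mem, hpow]
      exact Ideal.subset_span ⟨s, hs, rfl⟩
  -- linear independence of monomials
  have hli : LinearIndependent K (fun s : Fin 2 →₀ ℕ => monomial s (1 : K)) := by
    have h := (basisMonomials (Fin 2) K).linearIndependent
    rwa [coe_basisMonomials] at h
  have hdisj : Disjoint (Submodule.span K (mn '' T)) (Submodule.span K (mn '' Tᶜ)) :=
    hli.disjoint_span_image disjoint_compl_right
  have hcodisj : Submodule.span K (mn '' T) ⊔ Submodule.span K (mn '' Tᶜ) = ⊤ := by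
    rw [← Submodule.span_union, ← Set.image_union, Set.union_compl_self, Set.image_univ]
    have h := (basisMonomials (Fin 2) K).span_eq
    rwa [coe_basisMonomials] at h
  have hcompl : IsCompl (Submodule.span K (mn '' T)) (Submodule.span K (mn '' Tᶜ)) :=
    ⟨hdisj, codisjoint_iff.mpr hcodisj⟩
  -- the chain of isomorphisms
  have e1 := (Submodule.Quotient.restrictScalarsEquiv K (I ^ (k + 1))).symm
  have e2 := Submodule.quotEquivOfEq _ _ hkey
  have e3 := Submodule.quotientEquivOfIsCompl _ _ hcompl
  have hfr : Module.finrank K (MvPolynomial (Fin 2) K ⧸ I ^ (k + 1)) =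
      Module.finrank K (Submodule.span K (mn '' Tᶜ)) :=
    (e1.trans (e2.trans e3)).finrank_eq
  -- compute the rank of the complement span
  have hD1 : 1 ≤ D := by
    rw [hD]
    calc 1 = 1 * 1 := (one_mul 1).symm
    _ ≤ (k + 1) * d := Nat.mul_le_mul (by omega) hd
  let ι := (u : Fin D) × Fin (b (D - (u : ℕ)))
  let emb : ι → (Fin 2 →₀ ℕ) := fun p =>
    Finsupp.single 0 (p.1 : ℕ) + Finsupp.single 1 (p.2 : ℕ)
  let g : ι → MvPolynomial (Fin 2) K := mn ∘ emb
  have hrange : Set.range g = mn '' Tᶜ := by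
    ext m
    constructor
    · rintro ⟨⟨u, v⟩, rfl⟩
      refine ⟨emb ⟨u, v⟩, ?_, rfl⟩
      show ¬ b (D - (emb ⟨u, v⟩) 0) ≤ (emb ⟨u, v⟩) 1
      show ¬ b (D - ((Finsupp.single (0 : Fin 2) (u : ℕ) +
        Finsupp.single 1 (v : ℕ) : Fin 2 →₀ ℕ)) 0) ≤
        ((Finsupp.single (0 : Fin 2) (u : ℕ) + Finsupp.single 1 (v : ℕ) : Fin 2 →₀ ℕ)) 1
      rw [fin2_app0, fin2_app1]
      exact not_le.mpr v.isLt
    · rintro ⟨s, hs, rfl⟩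
      have hs' : s 1 < b (D - s 0) := not_le.mp hs
      have hs0 : s 0 < D := by
        by_contra hcon
        push_neg at hcon
        have he : D - s 0 = 0 := by omega
        rw [he, hb0] at hs'
        omega
      refine ⟨⟨⟨s 0, hs0⟩, ⟨s 1, hs'⟩⟩, ?_⟩
      show mn (Finsupp.single 0 (s 0) + Finsupp.single 1 (s 1)) = mn s
      rw [fin2_split]
  have hembinj : Function.Injective emb := by
    rintro ⟨u, v⟩ ⟨u', v'⟩ h
    have h0 : (u : ℕ) = (u' : ℕ) := by
      have := congrArg (fun s : Fin 2 →₀ ℕ => s 0) h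
      simpa [emb, fin2_app0] using this
    have h1 : (v : ℕ) = (v' : ℕ) := by
      have := congrArg (fun s : Fin 2 →₀ ℕ => s 1) h
      simpa [emb, fin2_app1] using this
    have hu : u = u' := Fin.ext h0
    subst hu
    have hv : v = v' := Fin.ext h1
    rw [hv]
  have hgli : LinearIndependent K g := hli.comp emb hembinj
  have hcard : Module.finrank K (Submodule.span K (mn '' Tᶜ)) =
      ∑ u : Fin D, b (D - (u : ℕ)) := by
    rw [← hrange, finrank_span_eq_card hgli]
    simp [ι, Fintype.card_sigma]
  -- sum juggling
  have hsum1 : ∑ u : Fin D, b (D - (u : ℕ)) = ∑ u ∈ Finset.range D, b (D - u) :=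
    Fin.sum_univ_eq_sum_range (fun u => b (D - u)) D
  have hsum2 : ∑ u ∈ Finset.range D, b (D - u) = ∑ u ∈ Finset.range D, b (u + 1) := by
    rw [← Finset.sum_range_reflect (fun j => b (j + 1)) D]
    apply Finset.sum_congr rfl
    intro u hu
    have : u < D := Finset.mem_range.mp hu
    congr 1
    omega
  have hsum3 : ∑ i ∈ Finset.range (D + 1), b i = ∑ u ∈ Finset.range D, b (u + 1) := by
    rw [Finset.sum_range_succ']
    simp [hb0]
  rw [hfr, hcard, hsum1, hsum2, ← hsum3]
end

section
/- Let a_0 < a_1 < ... < a_d be integers with a_0 = 0, and suppose that for all i, j with 0 ≤ i ≤ j ≤ d: a_i + a_j ≥ a_0 + a_{i+j} whenever i + j ≤ d, and a_i + a_j ≥ a_d + a_{i+j-d} whenever i + j ≥ d. Let L = (x^{d-i} y^{a_i} : 0 ≤ i ≤ d) ⊆ K[x,y]. Then L² = (x^d, y^{a_d}) · L. -/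
open MvPolynomial

/-- A lex-segment ideal `L` whose exponent vector lies in the closed revlex cone
satisfies `L² = (x^d, y^{a_d})·L`. -/
theorem stmt16 (K : Type*) [Field K] (d : ℕ) (hd : 1 ≤ d) (a : ℕ → ℕ) (ha0 : a 0 = 0)
    (hstrict : ∀ i, i < d → a i < a (i + 1))
    (hineq1 : ∀ i j, i ≤ j → j ≤ d → i + j ≤ d → a 0 + a (i + j) ≤ a i + a j)
    (hineq2 : ∀ i j, i ≤ j → j ≤ d → d ≤ i + j → a d + a (i + j - d) ≤ a i + a j)
    (L : Ideal (MvPolynomial (Fin 2) K))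
    (hL : L = Ideal.span {m : MvPolynomial (Fin 2) K |
      ∃ i ≤ d, m = X 0 ^ (d - i) * X 1 ^ (a i)}) :
    L * L = Ideal.span {X 0 ^ d, X 1 ^ (a d)} * L := by
  have hgen : ∀ i, i ≤ d → X 0 ^ (d - i) * X 1 ^ (a i) ∈ L := by
    intro i hi
    rw [hL]
    exact Ideal.subset_span ⟨i, hi, rfl⟩
  have hxd : (X 0 : MvPolynomial (Fin 2) K) ^ d ∈
      Ideal.span {X 0 ^ d, X 1 ^ (a d)} :=
    Ideal.subset_span (Set.mem_insert _ _)
  have hyd : (X 1 : MvPolynomial (Fin 2) K) ^ (a d) ∈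
      Ideal.span {X 0 ^ d, X 1 ^ (a d)} :=
    Ideal.subset_span (Set.mem_insert_of_mem _ rfl)
  have key : ∀ i j, i ≤ j → j ≤ d →
      (X 0 ^ (d - i) * X 1 ^ (a i)) * (X 0 ^ (d - j) * X 1 ^ (a j)) ∈
        Ideal.span {X 0 ^ d, (X 1 : MvPolynomial (Fin 2) K) ^ (a d)} * L := by
    intro i j hij hj
    rcases le_or_gt (i + j) d with h | h
    · have h1 : a (i + j) ≤ a i + a j := by
        have := hineq1 i j hij hj h
        omega
      have heq : (X 0 ^ (d - i) * X 1 ^ (a i)) * (X 0 ^ (d - j) * X 1 ^ (a j)) =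
          (X 1 : MvPolynomial (Fin 2) K) ^ (a i + a j - a (i + j)) *
            (X 0 ^ d * (X 0 ^ (d - (i + j)) * X 1 ^ (a (i + j)))) := by
        have e1 : d - i + (d - j) = d + (d - (i + j)) := by omega
        have e2 : a i + a j = a i + a j - a (i + j) + a (i + j) := by omega
        rw [mul_mul_mul_comm, ← pow_add, ← pow_add, e1]
        conv_lhs => rw [e2]
        rw [pow_add, pow_add]
        ring
      rw [heq]
      exact Ideal.mul_mem_left _ _ (Ideal.mul_mem_mul hxd (hgen (i + j) h))
    · have hd' : d ≤ i + j := h.le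
      have h2 : a d + a (i + j - d) ≤ a i + a j := hineq2 i j hij hj hd'
      have hijd : i + j - d ≤ d := by omega
      have heq : (X 0 ^ (d - i) * X 1 ^ (a i)) * (X 0 ^ (d - j) * X 1 ^ (a j)) =
          (X 1 : MvPolynomial (Fin 2) K) ^ (a i + a j - a d - a (i + j - d)) *
            (X 1 ^ (a d) * (X 0 ^ (d - (i + j - d)) * X 1 ^ (a (i + j - d)))) := by
        have e1 : d - i + (d - j) = d - (i + j - d) := by omega
        have e2 : a i + a j =
            a i + a j - a d - a (i + j - d) + (a d + a (i + j - d)) := by omega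
        rw [mul_mul_mul_comm, ← pow_add, ← pow_add, e1]
        conv_lhs => rw [e2]
        rw [pow_add, pow_add]
        ring
      rw [heq]
      exact Ideal.mul_mem_left _ _ (Ideal.mul_mem_mul hyd (hgen (i + j - d) hijd))
  apply le_antisymm
  · conv_lhs => rw [hL]
    rw [Ideal.span_mul_span', Ideal.span_le]
    rintro p ⟨s, ⟨i, hi, rfl⟩, t, ⟨j, hj, rfl⟩, rfl⟩
    rcases le_total i j with hij | hij
    · exact key i j hij hj
    · have hk := key j i hij hi
      rwa [mul_comm (X 0 ^ (d - j) * X 1 ^ (a j))] at hk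
  · have hIL : Ideal.span {(X 0 : MvPolynomial (Fin 2) K) ^ d, X 1 ^ (a d)} ≤ L := by
      rw [Ideal.span_le]
      rintro p hp
      rcases hp with rfl | rfl
      · have := hgen 0 (Nat.zero_le d)
        simpa [ha0] using this
      · have := hgen d le_rfl
        simpa using this
    exact mul_le_mul' hIL le_rfl
end
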